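/- Fix integers D ≥ 1 and r ≥ 3, and let C = 𝔸_D⁻¹𝔸_D*⁻¹𝔸_D𝔸_D*. Then for every integer s with −D ≤ s ≤ D, the scalar (1−r)^s is an eigenvalue of C; that is, there exists a nonzero vector v ∈ ℂ^𝕏 with C v = (1−r)^s·v. -/

import Mathlib

/-- The `D`-th distance matrix `𝔸_D` of the Hamming graph `H(D,r)`:
the `(u,v)`-entry is `1` if `u` and `v` differ in all `D` coordinates, `0` otherwise. -/
noncomputable def hammingAD (D r : ℕ) : Matrix (Fin D → Fin r) (Fin D → Fin r) ℂ :=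
  Matrix.of fun u v => if ∀ k, u k ≠ v k then 1 else 0

/-- The Hamming weight of a vertex of `H(D,r)`: the number of nonzero coordinates. -/
def hammingWt {D r : ℕ} [NeZero r] (y : Fin D → Fin r) : ℕ :=
  (Finset.univ.filter fun k => y k ≠ 0).card

/-- The `D`-th dual distance matrix `𝔸_D*` of `H(D,r)` with respect to the base vertex
`(0,…,0)`: the diagonal matrix with `(y,y)`-entry `(−1)^{w(y)} (r−1)^{D−w(y)}`. -/
noncomputable def hammingADstar (D r : ℕ) [NeZero r] :
    Matrix (Fin D → Fin r) (Fin D → Fin r) ℂ :=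
  Matrix.diagonal fun y => (-1) ^ hammingWt y * ((r : ℂ) - 1) ^ (D - hammingWt y)

/-- The group commutator `C = 𝔸_D⁻¹ 𝔸_D*⁻¹ 𝔸_D 𝔸_D*`. -/
noncomputable def hammingC (D r : ℕ) [NeZero r] :
    Matrix (Fin D → Fin r) (Fin D → Fin r) ℂ :=
  (hammingAD D r)⁻¹ * (hammingADstar D r)⁻¹ * hammingAD D r * hammingADstar D r

namespace Stmt16Aux

open Finset Matrix

lemma sum_erase_eq {r : ℕ} (f : Fin r → ℂ) (u : Fin r) :
    ∑ a ∈ Finset.univ.erase u, f a = (∑ a, f a) - f u := by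
  rw [Finset.sum_erase_eq_sub (Finset.mem_univ u)]

/-- the per-coordinate diagonal entry -/
noncomputable def g (r : ℕ) [NeZero r] (a : Fin r) : ℂ := if a = 0 then (r : ℂ) - 1 else -1

/-- the per-coordinate eigenvector, indexed by the exponent choice `c ∈ {1, 0, -1}` -/
noncomputable def fv (r : ℕ) (c : ℤ) (a : Fin r) : ℂ :=
  if c = 1 then (if (a : ℕ) = 0 then 1 else 0)
  else if c = 0 then (if (a : ℕ) = 1 then 1 else if (a : ℕ) = 2 then -1 else 0)
  else 1

lemma sum_g {r : ℕ} [NeZero r] : ∑ a, g r a = 0 := by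
  have : ∀ a : Fin r, g r a = (if a = 0 then (r : ℂ) else 0) - 1 := by
    intro a; unfold g; split <;> ring
  simp only [this, Finset.sum_sub_distrib, Finset.sum_ite_eq', Finset.mem_univ, if_true,
    Finset.sum_const, Finset.card_univ, Fintype.card_fin, nsmul_eq_mul, mul_one]
  ring

lemma eigen {r : ℕ} [NeZero r] (hr : 3 ≤ r) (c : ℤ) (hc : c = 1 ∨ c = 0 ∨ c = -1) (u : Fin r) :
    ∑ a ∈ Finset.univ.erase u, g r a * fv r c a
      = (1 - (r : ℂ)) ^ c * (g r u * ∑ a ∈ Finset.univ.erase u, fv r c a) := by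
  have hr1 : ((r : ℂ) - 1) ≠ 0 := by
    have : (r : ℂ) ≠ 1 := by exact_mod_cast (by omega : r ≠ 1)
    intro h; apply this; linear_combination h
  rcases hc with rfl | rfl | rfl
  · -- c = 1, fv = indicator of 0
    have hfv : ∀ a : Fin r, fv r 1 a = if a = 0 then 1 else 0 := by
      intro a; unfold fv; rw [if_pos rfl]
      rcases eq_or_ne a 0 with h | h
      · subst h; simp
      · rw [if_neg h, if_neg (fun h' => h (Fin.ext (by simp [h'])))]
    rw [sum_erase_eq, sum_erase_eq]
    simp only [hfv, mul_ite, mul_one, mul_zero, Finset.sum_ite_eq', Finset.mem_univ, if_true]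
    rcases eq_or_ne u 0 with rfl | h
    · simp [g]
    · simp [g, h]
  · -- c = 0
    have hfv : ∀ a : Fin r, fv r 0 a =
        (if a = (⟨1, by omega⟩ : Fin r) then 1 else 0)
          + (if a = (⟨2, by omega⟩ : Fin r) then -1 else 0) := by
      intro a; unfold fv; simp only [Fin.ext_iff]
      rcases eq_or_ne (a : ℕ) 1 with h1 | h1 <;> rcases eq_or_ne (a : ℕ) 2 with h2 | h2 <;>
        simp [h1, h2]
    have hsum : ∑ a, fv r 0 a = 0 := by
      simp [hfv, Finset.sum_add_distrib, Finset.sum_ite_eq']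
    have hsumg : ∑ a, g r a * fv r 0 a = 0 := by
      simp only [hfv, mul_add, Finset.sum_add_distrib, mul_ite, mul_one, mul_zero,
        Finset.sum_ite_eq', Finset.mem_univ, if_true]
      have h1 : g r (⟨1, by omega⟩ : Fin r) = -1 := by
        unfold g; rw [if_neg]; simp [Fin.ext_iff]
      have h2 : g r (⟨2, by omega⟩ : Fin r) = -1 := by
        unfold g; rw [if_neg]; simp [Fin.ext_iff]
      rw [h1, h2]; ring
    rw [sum_erase_eq, sum_erase_eq, hsum, hsumg, zpow_zero]
    ring
  · -- c = -1, fv = 1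
    have hfv : ∀ a : Fin r, fv r (-1) a = 1 := by intro a; unfold fv; norm_num
    have hcard : ((Finset.univ.erase u).card : ℂ) = (r : ℂ) - 1 := by
      rw [Finset.card_erase_of_mem (Finset.mem_univ u), Finset.card_univ, Fintype.card_fin]
      push_cast [Nat.cast_sub (by omega : 1 ≤ r)]
      ring
    simp only [hfv, mul_one, Finset.sum_const, nsmul_eq_mul, mul_one]
    rw [sum_erase_eq, sum_g, hcard]
    rw [_root_.zpow_neg_one]
    have h1r : (1 - (r : ℂ)) ≠ 0 := by intro h; apply hr1; linear_combination -h
    field_simp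
    ring

lemma prod_indicator {D : ℕ} (P : Fin D → Prop) [DecidablePred P] :
    (∏ k, if P k then (1 : ℂ) else 0) = if ∀ k, P k then 1 else 0 := by
  by_cases h : ∀ k, P k
  · simp [h]
  · push_neg at h
    obtain ⟨k, hk⟩ := h
    rw [if_neg (by push_neg; exact ⟨k, hk⟩)]
    exact Finset.prod_eq_zero (Finset.mem_univ k) (by simp [hk])

set_option maxHeartbeats 800000 in
lemma AD_mulVec_prod {D r : ℕ} (h : Fin D → Fin r → ℂ) (u : Fin D → Fin r) :
    (hammingAD D r).mulVec (fun y => ∏ k, h k (y k)) u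
      = ∏ k, ∑ a ∈ Finset.univ.erase (u k), h k a := by
  unfold hammingAD Matrix.mulVec
  simp only [Matrix.of_apply]
  have step1 : ∀ y : Fin D → Fin r,
      (if ∀ k, u k ≠ y k then (1:ℂ) else 0) * ∏ k, h k (y k)
        = ∏ k, (if u k ≠ y k then (1:ℂ) else 0) * h k (y k) := by
    intro y
    rw [Finset.prod_mul_distrib, ← prod_indicator (fun k => u k ≠ y k)]
  have step2 : ∀ k, (∑ a, (if u k ≠ a then (1:ℂ) else 0) * h k a)
      = ∑ a ∈ Finset.univ.erase (u k), h k a := by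
    intro k
    simp only [ite_mul, one_mul, zero_mul]
    rw [← Finset.sum_filter, Finset.filter_ne]
  calc (∑ y : Fin D → Fin r, (if ∀ k, u k ≠ y k then (1:ℂ) else 0) * ∏ k, h k (y k))
      = ∑ y : Fin D → Fin r, ∏ k, (if u k ≠ y k then (1:ℂ) else 0) * h k (y k) :=
        Finset.sum_congr rfl fun y _ => step1 y
    _ = ∏ k, ∑ a, (if u k ≠ a then (1:ℂ) else 0) * h k a :=
        (Fintype.prod_sum (fun k a => (if u k ≠ a then (1:ℂ) else 0) * h k a)).symm
    _ = ∏ k, ∑ a ∈ Finset.univ.erase (u k), h k a := Finset.prod_congr rfl fun k _ => step2 k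

/-- candidate inverse of `hammingAD` -/
noncomputable def ADinv (D r : ℕ) : Matrix (Fin D → Fin r) (Fin D → Fin r) ℂ :=
  Matrix.of fun u v => ∏ k, (((r : ℂ) - 1)⁻¹ - if u k = v k then 1 else 0)

lemma AD_mul_ADinv {D r : ℕ} (hr : 3 ≤ r) : hammingAD D r * ADinv D r = 1 := by
  have hr1 : ((r : ℂ) - 1) ≠ 0 := by
    have : (r : ℂ) ≠ 1 := by exact_mod_cast (by omega : r ≠ 1)
    intro h; apply this; linear_combination h
  haveI : NeZero r := ⟨by omega⟩
  ext u w
  rw [Matrix.mul_apply]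
  have : ∑ y, hammingAD D r u y * ADinv D r y w
      = (hammingAD D r).mulVec
          (fun y => ∏ k, (((r : ℂ) - 1)⁻¹ - if y k = w k then 1 else 0)) u := rfl
  rw [this, AD_mulVec_prod (fun k a => (((r : ℂ) - 1)⁻¹ - if a = w k then 1 else 0)) u]
  have inner : ∀ k, ∑ a ∈ Finset.univ.erase (u k), (((r : ℂ) - 1)⁻¹ - if a = w k then 1 else 0)
      = if u k = w k then 1 else 0 := by
    intro k
    rw [Finset.sum_sub_distrib, Finset.sum_const,
      Finset.sum_ite_eq' (Finset.univ.erase (u k)) (w k) (fun _ => (1:ℂ))]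
    rw [Finset.card_erase_of_mem (Finset.mem_univ _), Finset.card_univ, Fintype.card_fin]
    have hc : ((r - 1 : ℕ) : ℂ) = (r : ℂ) - 1 := by
      push_cast [Nat.cast_sub (by omega : 1 ≤ r)]; ring
    rw [nsmul_eq_mul, hc, mul_inv_cancel₀ hr1]
    rcases eq_or_ne (u k) (w k) with h | h
    · rw [if_pos h, if_neg (by simp [h]), sub_zero]
    · rw [if_neg h, if_pos (by simp [Ne.symm h]), sub_self]
  rw [Finset.prod_congr rfl (fun k _ => inner k), prod_indicator (fun k => u k = w k),
    Matrix.one_apply]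
  simp [funext_iff]

lemma ADinv_mul_AD {D r : ℕ} (hr : 3 ≤ r) : ADinv D r * hammingAD D r = 1 := by
  have hA : (hammingAD D r)ᵀ = hammingAD D r := by
    ext u v; simp only [Matrix.transpose_apply, hammingAD, Matrix.of_apply]
    exact if_congr (forall_congr' fun k => ne_comm) rfl rfl
  have hM : (ADinv D r)ᵀ = ADinv D r := by
    ext u v; simp only [Matrix.transpose_apply, ADinv, Matrix.of_apply]
    refine Finset.prod_congr rfl fun k _ => ?_
    exact congrArg _ (if_congr eq_comm rfl rfl)
  calc ADinv D r * hammingAD D r = (ADinv D r)ᵀ * (hammingAD D r)ᵀ := by rw [hA, hM]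
    _ = (hammingAD D r * ADinv D r)ᵀ := (Matrix.transpose_mul _ _).symm
    _ = (1 : Matrix _ _ ℂ)ᵀ := by rw [AD_mul_ADinv hr]
    _ = 1 := Matrix.transpose_one

lemma diag_prod {D r : ℕ} [NeZero r] (y : Fin D → Fin r) :
    (-1 : ℂ) ^ hammingWt y * ((r : ℂ) - 1) ^ (D - hammingWt y) = ∏ k, g r (y k) := by
  classical
  rw [← Finset.prod_filter_mul_prod_filter_not Finset.univ (fun k => y k ≠ 0)
    (fun k => g r (y k))]
  have h1 : ∏ k ∈ Finset.univ.filter (fun k => y k ≠ 0), g r (y k) = (-1 : ℂ) ^ hammingWt y := by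
    rw [Finset.prod_congr rfl (fun k hk => ?_), Finset.prod_const]
    · rfl
    · simp only [Finset.mem_filter] at hk
      unfold g; rw [if_neg hk.2]
  have h2 : ∏ k ∈ Finset.univ.filter (fun k => ¬ y k ≠ 0), g r (y k)
      = ((r : ℂ) - 1) ^ (D - hammingWt y) := by
    rw [Finset.prod_congr rfl (fun k hk => ?_), Finset.prod_const]
    · congr 1
      have := Finset.card_filter_add_card_filter_not (s := Finset.univ)
        (p := fun k : Fin D => y k ≠ 0)
      simp only [Finset.card_univ, Fintype.card_fin] at this
      unfold hammingWt
      omega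
    · simp only [Finset.mem_filter, not_not] at hk
      unfold g; rw [if_pos hk.2]
  rw [h1, h2]

lemma prod_zpow_sum {D : ℕ} (x : ℂ) (hx : x ≠ 0) (c : Fin D → ℤ) (s : Finset (Fin D)) :
    ∏ k ∈ s, x ^ (c k) = x ^ (∑ k ∈ s, c k) := by
  classical
  induction s using Finset.induction with
  | empty => simp
  | insert a s h ih =>
      rw [Finset.prod_insert h, Finset.sum_insert h, ih, zpow_add₀ hx]

lemma sum_if_lt {D n : ℕ} (hn : n ≤ D) (t : ℤ) :
    ∑ k : Fin D, (if (k : ℕ) < n then t else 0) = n * t := by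
  rw [Fin.sum_univ_eq_sum_range (fun i => if i < n then t else 0) D]
  rw [← Finset.sum_filter]
  have : (Finset.range D).filter (· < n) = Finset.range n := by
    ext i
    simp only [Finset.mem_filter, Finset.mem_range]
    omega
  rw [this, Finset.sum_const, Finset.card_range]
  simp

end Stmt16Aux

open Stmt16Aux Finset Matrix in
theorem stmt16 (D r : ℕ) (hD : 1 ≤ D) (hr : 3 ≤ r)
    (s : ℤ) (hs₁ : -(D : ℤ) ≤ s) (hs₂ : s ≤ (D : ℤ)) :
    ∃ v : (Fin D → Fin r) → ℂ, v ≠ 0 ∧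
      (@hammingC D r ⟨by omega⟩).mulVec v = ((1 - (r : ℂ)) ^ s) • v := by
  haveI hNZ : NeZero r := ⟨by omega⟩
  have hr1 : ((r : ℂ) - 1) ≠ 0 := by
    have : (r : ℂ) ≠ 1 := by exact_mod_cast (by omega : r ≠ 1)
    intro h; apply this; linear_combination h
  have h1r : (1 - (r : ℂ)) ≠ 0 := by intro h; apply hr1; linear_combination -h
  set n := s.natAbs with hn
  have hnD : n ≤ D := by omega
  set t : ℤ := if 0 ≤ s then 1 else -1 with ht
  set c : Fin D → ℤ := fun k => if (k : ℕ) < n then t else 0 with hc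
  have hck : ∀ k, c k = 1 ∨ c k = 0 ∨ c k = -1 := by
    intro k
    simp only [hc, ht]
    split_ifs <;> simp
  have hsum : ∑ k, c k = s := by
    rw [hc, sum_if_lt hnD t, ht]
    split_ifs with h <;> omega
  set v : (Fin D → Fin r) → ℂ := fun y => ∏ k, fv r (c k) (y k) with hv
  set A := hammingAD D r with hA
  set B := hammingADstar D r with hB
  -- v is nonzero
  have hvne : v ≠ 0 := by
    set y₀ : Fin D → Fin r := fun k => if c k = 0 then (⟨1, by omega⟩ : Fin r) else 0 with hy₀
    have : v y₀ = 1 := by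
      rw [hv]
      refine Finset.prod_eq_one fun k _ => ?_
      rcases hck k with h | h | h <;> simp only [hy₀, h]
      · norm_num [fv]
      · norm_num [fv]
      · norm_num [fv]
    intro h0
    rw [h0] at this
    simp at this
  refine ⟨v, hvne, ?_⟩
  -- the key commutation relation
  have key : A.mulVec (B.mulVec v) = ((1 - (r : ℂ)) ^ s) • (B.mulVec (A.mulVec v)) := by
    funext u
    have hBv : B.mulVec v = fun y => ∏ k, (g r (y k) * fv r (c k) (y k)) := by
      funext y
      show (Matrix.diagonal _ *ᵥ v) y = _
      rw [Matrix.mulVec_diagonal, diag_prod, hv, ← Finset.prod_mul_distrib]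
    rw [hBv]
    rw [AD_mulVec_prod (fun k a => g r a * fv r (c k) a) u]
    rw [Finset.prod_congr rfl (fun k _ => eigen hr (c k) (hck k) (u k))]
    rw [Finset.prod_mul_distrib, prod_zpow_sum _ h1r c Finset.univ, hsum,
      Finset.prod_mul_distrib]
    have hAv : A.mulVec v u = ∏ k, ∑ a ∈ Finset.univ.erase (u k), fv r (c k) a :=
      AD_mulVec_prod (fun k a => fv r (c k) a) u
    show _ = ((1 - (r : ℂ)) ^ s) * ((Matrix.diagonal _ *ᵥ (A.mulVec v)) u)
    rw [Matrix.mulVec_diagonal, diag_prod, hAv]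
  -- invertibility facts
  have hAdet : IsUnit A.det := Matrix.isUnit_det_of_right_inverse (AD_mul_ADinv hr)
  have hAinv : A⁻¹ * A = 1 := Matrix.nonsing_inv_mul A hAdet
  have hBdet : IsUnit B.det := by
    rw [hB, hammingADstar, Matrix.det_diagonal]
    refine isUnit_iff_ne_zero.2 (Finset.prod_ne_zero_iff.2 fun y _ => ?_)
    exact mul_ne_zero (pow_ne_zero _ (by norm_num)) (pow_ne_zero _ hr1)
  have hBinv : B⁻¹ * B = 1 := Matrix.nonsing_inv_mul B hBdet
  -- assemble
  show (A⁻¹ * B⁻¹ * A * B).mulVec v = ((1 - (r : ℂ)) ^ s) • v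
  have assoc : A⁻¹ * B⁻¹ * A * B = A⁻¹ * (B⁻¹ * (A * B)) := by
    simp [Matrix.mul_assoc]
  rw [assoc, ← Matrix.mulVec_mulVec, ← Matrix.mulVec_mulVec, ← Matrix.mulVec_mulVec, key,
    Matrix.mulVec_smul, Matrix.mulVec_smul, Matrix.mulVec_mulVec (A *ᵥ v) B⁻¹ B, hBinv,
    Matrix.one_mulVec, Matrix.mulVec_mulVec v A⁻¹ A, hAinv, Matrix.one_mulVec]
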